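/- Let Θ > 0 and ρ > 0 be reals with ρ ≠ 1/2, and define g : ℝ → ℝ by g(t) := (1 − 2ρ)/(exp(Θ(1 − 2ρ)t) − 2ρ). Then g(0) = 1; for every t ≥ 0 the denominator exp(Θ(1−2ρ)t) − 2ρ is nonzero and 0 < g(t) ≤ 1; and g is differentiable at every t ≥ 0 with g'(t) = Θ·g(t)·(2ρ − 1 − 2ρ·g(t)). -/

import Mathlib

/-- the explicit solution `g(t) = (1−2ρ)/(e^{Θ(1−2ρ)t} − 2ρ)` of the
fast-phase mass ODE for the inclusion process with `A = 1`: it starts at `1`,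
stays in `(0,1]` (with nonvanishing denominator) for `t ≥ 0`, and solves
`g' = Θ g (2ρ − 1 − 2ρ g)`. -/
theorem fastPhaseMass_explicit (Θ ρ : ℝ) (hΘ : 0 < Θ) (hρ : 0 < ρ) (hρc : ρ ≠ 1 / 2) :
    let g : ℝ → ℝ := fun t => (1 - 2 * ρ) / (Real.exp (Θ * (1 - 2 * ρ) * t) - 2 * ρ)
    g 0 = 1 ∧
    (∀ t, 0 ≤ t → Real.exp (Θ * (1 - 2 * ρ) * t) - 2 * ρ ≠ 0 ∧ 0 < g t ∧ g t ≤ 1) ∧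
    (∀ t, 0 ≤ t → HasDerivAt g (Θ * g t * (2 * ρ - 1 - 2 * ρ * g t)) t) := by
  intro g
  have key : ∀ t : ℝ, 0 ≤ t →
      (0 < 1 - 2 * ρ ∧ 1 - 2 * ρ ≤ Real.exp (Θ * (1 - 2 * ρ) * t) - 2 * ρ) ∨
      (1 - 2 * ρ < 0 ∧ Real.exp (Θ * (1 - 2 * ρ) * t) - 2 * ρ ≤ 1 - 2 * ρ) := by
    intro t ht
    rcases lt_or_gt_of_ne hρc with h | h
    · left
      have ha : 0 < 1 - 2 * ρ := by linarith
      have : (1:ℝ) ≤ Real.exp (Θ * (1 - 2 * ρ) * t) := by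
        apply Real.one_le_exp
        positivity
      constructor
      · exact ha
      · linarith
    · right
      have ha : 1 - 2 * ρ < 0 := by linarith
      have : Real.exp (Θ * (1 - 2 * ρ) * t) ≤ 1 := by
        apply Real.exp_le_one_iff.mpr
        have : Θ * (1 - 2 * ρ) ≤ 0 := by nlinarith
        nlinarith
      exact ⟨ha, by linarith⟩
  have hbound : ∀ t : ℝ, 0 ≤ t →
      Real.exp (Θ * (1 - 2 * ρ) * t) - 2 * ρ ≠ 0 ∧ 0 < g t ∧ g t ≤ 1 := by
    intro t ht
    rcases key t ht with ⟨ha, hd⟩ | ⟨ha, hd⟩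
    · have hdpos : 0 < Real.exp (Θ * (1 - 2 * ρ) * t) - 2 * ρ := lt_of_lt_of_le ha hd
      refine ⟨ne_of_gt hdpos, div_pos ha hdpos, ?_⟩
      exact div_le_one_of_le₀ hd hdpos.le
    · have hdneg : Real.exp (Θ * (1 - 2 * ρ) * t) - 2 * ρ < 0 := lt_of_le_of_lt hd ha
      refine ⟨ne_of_lt hdneg, div_pos_of_neg_of_neg ha hdneg, ?_⟩
      show (1 - 2 * ρ) / (Real.exp (Θ * (1 - 2 * ρ) * t) - 2 * ρ) ≤ 1
      rw [show (1 - 2 * ρ) / (Real.exp (Θ * (1 - 2 * ρ) * t) - 2 * ρ)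
          = (-(1 - 2 * ρ)) / (-(Real.exp (Θ * (1 - 2 * ρ) * t) - 2 * ρ)) by
        rw [neg_div_neg_eq]]
      apply div_le_one_of_le₀ (by linarith) (by linarith)
  refine ⟨?_, hbound, ?_⟩
  · show (1 - 2 * ρ) / (Real.exp (Θ * (1 - 2 * ρ) * 0) - 2 * ρ) = 1
    rw [mul_zero, Real.exp_zero]
    have : (1 : ℝ) - 2 * ρ ≠ 0 := by
      intro h; apply hρc; linarith
    field_simp
  · intro t ht
    obtain ⟨hne, -, -⟩ := hbound t ht
    have hE : HasDerivAt (fun s => Real.exp (Θ * (1 - 2 * ρ) * s) - 2 * ρ)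
        (Θ * (1 - 2 * ρ) * Real.exp (Θ * (1 - 2 * ρ) * t)) t := by
      have h1 : HasDerivAt (fun s : ℝ => Θ * (1 - 2 * ρ) * s) (Θ * (1 - 2 * ρ)) t := by
        simpa using (hasDerivAt_id t).const_mul (Θ * (1 - 2 * ρ))
      have := h1.exp
      simpa [mul_comm] using this.sub_const (2 * ρ)
    have hg := (hasDerivAt_const t (1 - 2 * ρ)).div hE hne
    convert hg using 1
    show Θ * g t * (2 * ρ - 1 - 2 * ρ * g t) = _
    simp only [g]
    field_simp
    ring
    all_goals rfl
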